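/- Suppose n ≥ 2. There is an su(2) block for ψ containing exactly 2 qubits if and only if ψ has a singlet factor. -/

import Mathlib

open scoped Matrix

noncomputable section

/-- The `n`-qubit Hilbert space `(ℂ²)^{⊗n}`, realized as functions `(Fin n → Fin 2) → ℂ`. -/
abbrev QState (n : ℕ) := (Fin n → Fin 2) → ℂ

/-- The ambient real vector space `ℝ × (Fin n → M₂(ℂ))` containing `u(1) ⊕ su(2)^n`. -/
abbrev GV (n : ℕ) := ℝ × (Fin n → Matrix (Fin 2) (Fin 2) ℂ)

/-- `su(2)`: traceless skew-Hermitian `2 × 2` complex matrices, as a real subspace. -/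
def su2 : Submodule ℝ (Matrix (Fin 2) (Fin 2) ℂ) where
  carrier := {X | Xᴴ = -X ∧ X.trace = 0}
  add_mem' := by
    rintro X Y ⟨hX1, hX2⟩ ⟨hY1, hY2⟩
    exact ⟨by rw [Matrix.conjTranspose_add, hX1, hY1, neg_add],
           by rw [Matrix.trace_add, hX2, hY2, add_zero]⟩
  zero_mem' := ⟨by simp, by simp⟩
  smul_mem' := by
    rintro r X ⟨hX1, hX2⟩
    exact ⟨by rw [Matrix.conjTranspose_smul, hX1, star_trivial, smul_neg],
           by rw [Matrix.trace_smul, hX2, smul_zero]⟩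

/-- The Lie algebra `g = u(1) ⊕ su(2)^n` as a real subspace of `GV n`. -/
def gSub (n : ℕ) : Submodule ℝ (GV n) :=
  (⊤ : Submodule ℝ ℝ).prod (Submodule.pi Set.univ fun _ => su2)

/-- `g_S`: elements `(0, X)` of `g` with `X j = 0` for `j ∉ S`. -/
def gS {n : ℕ} (S : Set (Fin n)) : Submodule ℝ (GV n) :=
  (⊥ : Submodule ℝ ℝ).prod (Submodule.pi Set.univ fun j =>
    letI := Classical.dec (j ∈ S)
    if j ∈ S then su2 else ⊥)

/-- `ḡ_S`: elements `(t, X)` of `g` with `X j = 0` for `j ∈ S`. -/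
def gBar {n : ℕ} (S : Set (Fin n)) : Submodule ℝ (GV n) :=
  (⊤ : Submodule ℝ ℝ).prod (Submodule.pi Set.univ fun j =>
    letI := Classical.dec (j ∈ S)
    if j ∈ S then (⊥ : Submodule ℝ (Matrix (Fin 2) (Fin 2) ℂ)) else su2)

/-- The projection `P_j : g → su(2)`, `(t, X) ↦ X j`. -/
def Pj {n : ℕ} (j : Fin n) : GV n →ₗ[ℝ] Matrix (Fin 2) (Fin 2) ℂ :=
  (LinearMap.proj j).comp (LinearMap.snd ℝ ℝ (Fin n → Matrix (Fin 2) (Fin 2) ℂ))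

/-- Apply the matrix `X` to qubit `j` of the state `ψ`. -/
def applySingle {n : ℕ} (j : Fin n) (X : Matrix (Fin 2) (Fin 2) ℂ) (ψ : QState n) : QState n :=
  fun I => ∑ k : Fin 2, X (I j) k * ψ (Function.update I j k)

/-- The infinitesimal local-unitary action: `dΦ_ψ(t, X) = i t ψ + Σ_j X_j ψ`. -/
def dPhi {n : ℕ} (ψ : QState n) : GV n →ₗ[ℝ] QState n where
  toFun x := fun I => Complex.I * (x.1 : ℂ) * ψ I + ∑ j, applySingle j (x.2 j) ψ I
  map_add' x y := by
    funext I
    simp only [applySingle, Prod.fst_add, Prod.snd_add, Pi.add_apply, Matrix.add_apply,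
      Complex.ofReal_add, add_mul, Finset.sum_add_distrib]
    ring
  map_smul' r x := by
    funext I
    simp only [applySingle, Prod.smul_fst, Prod.smul_snd, Pi.smul_apply, Matrix.smul_apply,
      smul_eq_mul, Complex.real_smul, Complex.ofReal_mul, RingHom.id_apply,
      Finset.mul_sum, mul_add]
    congr 1
    · ring
    · refine Finset.sum_congr rfl fun j _ => Finset.sum_congr rfl fun k _ => by ring

/-- The stabilizer subalgebra `K_ψ = {(t,X) ∈ g : dΦ_ψ(t,X) = 0}`. -/
def stab {n : ℕ} (ψ : QState n) : Submodule ℝ (GV n) :=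
  gSub n ⊓ LinearMap.ker (dPhi ψ)

/-- The componentwise bracket on `g` (zero in the `u(1)` component). -/
def gBracket {n : ℕ} (x y : GV n) : GV n :=
  (0, fun j => ⁅x.2 j, y.2 j⁆)

/-- An `su(2)` block for `ψ`: a set `S` of qubits with `dim (K_ψ ∩ g_S) > 1` and
`dim (K_ψ ∩ g_{S'}) = 0` for every proper subset `S' ⊊ S`. -/
def Su2Block {n : ℕ} (ψ : QState n) (S : Set (Fin n)) : Prop :=
  1 < Module.finrank ℝ ↥(stab ψ ⊓ gS S) ∧
  ∀ S' : Set (Fin n), S' ⊂ S → Module.finrank ℝ ↥(stab ψ ⊓ gS S') = 0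

/-- The union `B` of all `su(2)` blocks for `ψ`. -/
def blockUnion {n : ℕ} (ψ : QState n) : Set (Fin n) :=
  {q | ∃ S : Set (Fin n), Su2Block ψ S ∧ q ∈ S}

/-- The number `p` of `su(2)` blocks for `ψ`. -/
def blockCount {n : ℕ} (ψ : QState n) : ℕ :=
  {S : Set (Fin n) | Su2Block ψ S}.ncard

/-- `ψ` factors across the set `S` of qubits: `ψ(I) = φ(I|_S) · χ(I|_{Sᶜ})`. -/
def FactorsAcross {n : ℕ} (ψ : QState n) (S : Set (Fin n)) : Prop :=
  ∃ (φ : (↥S → Fin 2) → ℂ) (χ : (↥(Sᶜ) → Fin 2) → ℂ),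
    ∀ I : Fin n → Fin 2, ψ I = φ (fun j => I j.1) * χ (fun j => I j.1)

/-- `ψ` is a nonproduct state: it factors across no proper nonempty set of qubits. -/
def IsNonproduct {n : ℕ} (ψ : QState n) : Prop :=
  ∀ S : Set (Fin n), S ≠ ∅ → S ≠ Set.univ → ¬ FactorsAcross ψ S

/-- `ψ` has a single-qubit factor. -/
def HasSingleQubitFactor {n : ℕ} (ψ : QState n) : Prop :=
  ∃ j : Fin n, FactorsAcross ψ {j}

/-- Apply the local unitary (or just local linear) transformation `⊗_j U_j` to `ψ`. -/
def luApply {n : ℕ} (U : Fin n → Matrix (Fin 2) (Fin 2) ℂ) (ψ : QState n) : QState n :=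
  fun I => ∑ J : Fin n → Fin 2, (∏ j, U j (I j) (J j)) * ψ J

/-- Local unitary equivalence of `n`-qubit states. -/
def LUEquiv {n : ℕ} (ψ ψ' : QState n) : Prop :=
  ∃ U : Fin n → Matrix (Fin 2) (Fin 2) ℂ,
    (∀ j, U j ∈ Matrix.unitaryGroup (Fin 2) ℂ) ∧ ψ' = luApply U ψ

/-- The two-qubit singlet state `φ(a,b) = δ_{a0} δ_{b1} − δ_{a1} δ_{b0}`. -/
def singletFn : Fin 2 → Fin 2 → ℂ := fun a b =>
  if a = 0 ∧ b = 1 then 1 else if a = 1 ∧ b = 0 then -1 else 0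

/-- `ψ` has a singlet factor: it is LU-equivalent to a state that factors across a
two-element set of qubits, with the two-qubit factor being the singlet. -/
def HasSingletFactor {n : ℕ} (ψ : QState n) : Prop :=
  ∃ ψ' : QState n, LUEquiv ψ ψ' ∧ ∃ j k : Fin n, j ≠ k ∧
    ∃ χ : (↥(({j, k} : Set (Fin n))ᶜ) → Fin 2) → ℂ,
      ∀ I : Fin n → Fin 2, ψ' I = singletFn (I j) (I k) * χ (fun q => I q.1)

/-- The matrix `A = diag(i, −i) ∈ su(2)`. -/
def matA : Matrix (Fin 2) (Fin 2) ℂ := !![Complex.I, 0; 0, -Complex.I]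

/-- The generalized `n`-qubit GHZ state `α|0…0⟩ + β|1…1⟩`. -/
def ghz (n : ℕ) (α β : ℂ) : QState n := fun I =>
  if ∀ j, I j = 0 then α else if ∀ j, I j = 1 then β else 0

namespace Stmt10Aux

open Complex Matrix Function

lemma mem_su2_iff {X : Matrix (Fin 2) (Fin 2) ℂ} : X ∈ su2 ↔ Xᴴ = -X ∧ X.trace = 0 := Iff.rfl

lemma su2_11 {X : Matrix (Fin 2) (Fin 2) ℂ} (hX : X ∈ su2) : X 1 1 = -X 0 0 := by
  have h := hX.2
  rw [Matrix.trace_fin_two] at h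
  linear_combination h

lemma su2_10 {X : Matrix (Fin 2) (Fin 2) ℂ} (hX : X ∈ su2) :
    X 1 0 = -(starRingEnd ℂ) (X 0 1) := by
  have h := congrFun (congrFun hX.1 1) 0
  rw [Matrix.conjTranspose_apply, Matrix.neg_apply] at h
  have : X 1 0 = -star (X 0 1) := by rw [h]; ring
  simpa using this

lemma su2_00 {X : Matrix (Fin 2) (Fin 2) ℂ} (hX : X ∈ su2) :
    (starRingEnd ℂ) (X 0 0) = -X 0 0 := by
  have h := congrFun (congrFun hX.1 0) 0
  rw [Matrix.conjTranspose_apply, Matrix.neg_apply] at h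
  exact h

lemma su2_00_re {X : Matrix (Fin 2) (Fin 2) ℂ} (hX : X ∈ su2) : (X 0 0).re = 0 := by
  have h := congrArg Complex.re (su2_00 hX)
  simp [Complex.conj_re] at h
  linarith

lemma su2_00_eq {X : Matrix (Fin 2) (Fin 2) ℂ} (hX : X ∈ su2) :
    X 0 0 = (X 0 0).im * Complex.I := by
  rw [Complex.ext_iff]
  constructor
  · simp [su2_00_re hX]
  · simp

lemma matA_mem : matA ∈ su2 := by
  constructor
  · ext a b
    fin_cases a <;> fin_cases b <;>
      simp [matA, Matrix.conjTranspose_apply]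
  · simp [matA, Matrix.trace_fin_two]

lemma sum_update_eq {n : ℕ} (j : Fin n) (g : (Fin n → Fin 2) → Fin 2 → ℂ) :
    ∑ p : (Fin n → Fin 2) × Fin 2, g p.1 p.2
      = ∑ p : (Fin n → Fin 2) × Fin 2, g (Function.update p.1 j p.2) (p.1 j) := by
  have he : Function.Involutive
      (fun p : (Fin n → Fin 2) × Fin 2 => (Function.update p.1 j p.2, p.1 j)) := by
    rintro ⟨J, c⟩
    simp [Function.update_idem, Function.update_eq_self]
  exact (Fintype.sum_equiv he.toPerm
    (fun p => g (Function.update p.1 j p.2) (p.1 j)) (fun p => g p.1 p.2)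
    (fun p => rfl)).symm


variable {n : ℕ}

lemma sum_update_eq' (j : Fin n) (g : (Fin n → Fin 2) → Fin 2 → ℂ) :
    ∑ J : Fin n → Fin 2, ∑ c : Fin 2, g J c
      = ∑ J : Fin n → Fin 2, ∑ c : Fin 2, g (Function.update J j c) (J j) := by
  have h := sum_update_eq j g
  simpa [Fintype.sum_prod_type] using h

lemma luApply_comp (U V : Fin n → Matrix (Fin 2) (Fin 2) ℂ) (ψ : QState n) :
    luApply U (luApply V ψ) = luApply (fun j => U j * V j) ψ := by
  funext I
  simp only [luApply, Finset.mul_sum]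
  rw [Finset.sum_comm]
  refine Finset.sum_congr rfl fun K _ => ?_
  have h : ∀ J : Fin n → Fin 2,
      (∏ q, U q (I q) (J q)) * ((∏ q, V q (J q) (K q)) * ψ K)
        = (∏ q, U q (I q) (J q) * V q (J q) (K q)) * ψ K := by
    intro J; rw [Finset.prod_mul_distrib]; ring
  simp only [h]
  rw [← Finset.sum_mul]
  congr 1
  have hm : ∀ q, (U q * V q) (I q) (K q) = ∑ c, U q (I q) c * V q c (K q) :=
    fun q => Matrix.mul_apply
  simp only [hm]
  rw [Finset.prod_univ_sum, Fintype.piFinset_univ]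

lemma luApply_one (ψ : QState n) :
    luApply (fun _ => (1 : Matrix (Fin 2) (Fin 2) ℂ)) ψ = ψ := by
  funext I
  rw [luApply, Finset.sum_eq_single I]
  · simp [Matrix.one_apply]
  · intro J _ hJ
    obtain ⟨q, hq⟩ := Function.ne_iff.mp hJ
    have h0 : (1 : Matrix (Fin 2) (Fin 2) ℂ) (I q) (J q) = 0 :=
      Matrix.one_apply_ne (fun h => hq (h.symm ▸ rfl))
    rw [Finset.prod_eq_zero (Finset.mem_univ q) h0, zero_mul]
  · intro h; exact absurd (Finset.mem_univ I) h

lemma luApply_zero (U : Fin n → Matrix (Fin 2) (Fin 2) ℂ) :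
    luApply U (0 : QState n) = 0 := by
  funext I; simp [luApply]

lemma luApply_ne_zero (U : Fin n → Matrix (Fin 2) (Fin 2) ℂ)
    (hU : ∀ q, U q ∈ Matrix.unitaryGroup (Fin 2) ℂ) (ψ : QState n) (hψ : ψ ≠ 0) :
    luApply U ψ ≠ 0 := by
  intro h0
  have hinv : luApply (fun q => star (U q)) (luApply U ψ) = ψ := by
    rw [luApply_comp]
    have : (fun q => star (U q) * U q) = fun _ => (1 : Matrix (Fin 2) (Fin 2) ℂ) := by
      funext q; exact Matrix.mem_unitaryGroup_iff'.mp (hU q)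
    rw [this, luApply_one]
  rw [h0, luApply_zero] at hinv
  exact hψ hinv.symm

lemma applySingle_luApply (U : Fin n → Matrix (Fin 2) (Fin 2) ℂ) (j : Fin n)
    (M : Matrix (Fin 2) (Fin 2) ℂ) (hUj : star (U j) * U j = 1) (ψ : QState n) :
    applySingle j (U j * M * star (U j)) (luApply U ψ) = luApply U (applySingle j M ψ) := by
  have key : (U j * M * star (U j)) * U j = U j * M := by
    rw [Matrix.mul_assoc, hUj, Matrix.mul_one]
  funext I
  have hL : applySingle j (U j * M * star (U j)) (luApply U ψ) I
      = ∑ J : Fin n → Fin 2, (U j * M) (I j) (J j)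
          * (∏ q ∈ Finset.univ.erase j, U q (I q) (J q)) * ψ J := by
    simp only [applySingle, luApply, Finset.mul_sum]
    rw [Finset.sum_comm]
    refine Finset.sum_congr rfl fun J _ => ?_
    have hsplit : ∀ c, ∏ q, U q (Function.update I j c q) (J q)
        = U j c (J j) * ∏ q ∈ Finset.univ.erase j, U q (I q) (J q) := by
      intro c
      rw [← Finset.mul_prod_erase Finset.univ _ (Finset.mem_univ j)]
      congr 1
      · simp
      · exact Finset.prod_congr rfl fun q hq => by
          rw [Function.update_of_ne (Finset.ne_of_mem_erase hq)]
    simp only [hsplit]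
    rw [show (U j * M) (I j) (J j) = ((U j * M * star (U j)) * U j) (I j) (J j) from by
      rw [key]]
    rw [Matrix.mul_apply, Finset.sum_mul, Finset.sum_mul]
    exact Finset.sum_congr rfl fun c _ => by ring
  have hR : luApply U (applySingle j M ψ) I
      = ∑ J : Fin n → Fin 2, (U j * M) (I j) (J j)
          * (∏ q ∈ Finset.univ.erase j, U q (I q) (J q)) * ψ J := by
    simp only [applySingle, luApply, Finset.mul_sum]
    rw [sum_update_eq' j (fun J c => (∏ q, U q (I q) (J q))
      * (M (J j) c * ψ (Function.update J j c)))]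
    refine Finset.sum_congr rfl fun J _ => ?_
    have hsplit : ∀ c, ∏ q, U q (I q) (Function.update J j c q)
        = U j (I j) c * ∏ q ∈ Finset.univ.erase j, U q (I q) (J q) := by
      intro c
      rw [← Finset.mul_prod_erase Finset.univ _ (Finset.mem_univ j)]
      congr 1
      · simp
      · exact Finset.prod_congr rfl fun q hq => by
          rw [Function.update_of_ne (Finset.ne_of_mem_erase hq)]
    simp only [hsplit, Function.update_self, Function.update_idem, Function.update_eq_self]
    rw [Matrix.mul_apply, Finset.sum_mul, Finset.sum_mul]
    exact Finset.sum_congr rfl fun c _ => by ring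
  rw [hL, hR]

lemma dPhi_apply (ψ : QState n) (t : ℝ) (X : Fin n → Matrix (Fin 2) (Fin 2) ℂ)
    (I : Fin n → Fin 2) :
    dPhi ψ (t, X) I = Complex.I * t * ψ I + ∑ j, applySingle j (X j) ψ I := rfl

lemma dPhi_luApply (U : Fin n → Matrix (Fin 2) (Fin 2) ℂ)
    (hU : ∀ q, star (U q) * U q = 1) (ψ : QState n) (t : ℝ)
    (X : Fin n → Matrix (Fin 2) (Fin 2) ℂ) :
    dPhi (luApply U ψ) (t, fun q => U q * X q * star (U q)) = luApply U (dPhi ψ (t, X)) := by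
  funext I
  have hsplit : luApply U (dPhi ψ (t, X)) I
      = Complex.I * t * luApply U ψ I + ∑ j, luApply U (applySingle j (X j) ψ) I := by
    simp only [luApply, dPhi_apply, mul_add, Finset.sum_add_distrib]
    congr 1
    · rw [Finset.mul_sum]
      exact Finset.sum_congr rfl fun J _ => by ring
    · simp only [Finset.mul_sum]
      rw [Finset.sum_comm]
  rw [dPhi_apply, hsplit]
  congr 1
  exact Finset.sum_congr rfl fun j _ =>
    congrFun (applySingle_luApply U j (X j) (hU j) ψ) I
lemma conj_conj {U X : Matrix (Fin 2) (Fin 2) ℂ} (h : star U * U = 1) :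
    star U * (U * X * star U) * star (star U) = X := by
  rw [star_star]
  calc star U * (U * X * star U) * U = (star U * U) * X * (star U * U) := by
        simp only [Matrix.mul_assoc]
    _ = X := by rw [h, Matrix.one_mul, Matrix.mul_one]

lemma su2_conj {U X : Matrix (Fin 2) (Fin 2) ℂ}
    (hU : U ∈ Matrix.unitaryGroup (Fin 2) ℂ) (hX : X ∈ su2) : U * X * star U ∈ su2 := by
  constructor
  · have h1 : (U * X * star U)ᴴ = U * Xᴴ * star U := by
      simp [Matrix.conjTranspose_mul, Matrix.star_eq_conjTranspose, Matrix.mul_assoc]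
    rw [h1, hX.1, Matrix.mul_neg, Matrix.neg_mul]
  · rw [Matrix.trace_mul_cycle, Matrix.mem_unitaryGroup_iff'.mp hU, Matrix.one_mul, hX.2]

/-- Conjugation of `GV n` by a family of matrices. -/
def conjL (U : Fin n → Matrix (Fin 2) (Fin 2) ℂ) : GV n →ₗ[ℝ] GV n where
  toFun x := (x.1, fun q => U q * x.2 q * star (U q))
  map_add' x y := by
    refine Prod.ext rfl (funext fun q => ?_)
    simp [Matrix.mul_add, Matrix.add_mul]
  map_smul' r x := by
    refine Prod.ext rfl (funext fun q => ?_)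
    simp only [Prod.smul_snd, Pi.smul_apply, RingHom.id_apply]
    rw [Matrix.mul_smul, Matrix.smul_mul]

@[simp] lemma conjL_apply (U : Fin n → Matrix (Fin 2) (Fin 2) ℂ) (x : GV n) :
    conjL U x = (x.1, fun q => U q * x.2 q * star (U q)) := rfl

lemma conjL_conjL {U : Fin n → Matrix (Fin 2) (Fin 2) ℂ}
    (hU : ∀ q, U q ∈ Matrix.unitaryGroup (Fin 2) ℂ) (x : GV n) :
    conjL (fun q => star (U q)) (conjL U x) = x := by
  refine Prod.ext rfl (funext fun q => ?_)
  exact conj_conj (Matrix.mem_unitaryGroup_iff'.mp (hU q))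

lemma stab_conj_mem {U : Fin n → Matrix (Fin 2) (Fin 2) ℂ}
    (hU : ∀ q, U q ∈ Matrix.unitaryGroup (Fin 2) ℂ) {ψ : QState n} {x : GV n}
    (hx : x ∈ stab ψ) : conjL U x ∈ stab (luApply U ψ) := by
  obtain ⟨hg, hk⟩ := hx
  have hk' : dPhi ψ (x.1, x.2) = 0 := hk
  refine ⟨⟨trivial, fun q _ => su2_conj (hU q) (hg.2 q (Set.mem_univ q))⟩, ?_⟩
  have h := dPhi_luApply U (fun q => Matrix.mem_unitaryGroup_iff'.mp (hU q)) ψ x.1 x.2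
  show dPhi (luApply U ψ) (x.1, fun q => U q * x.2 q * star (U q)) = 0
  rw [h, hk', luApply_zero]

lemma stab_conj_iff {U : Fin n → Matrix (Fin 2) (Fin 2) ℂ}
    (hU : ∀ q, U q ∈ Matrix.unitaryGroup (Fin 2) ℂ) {ψ : QState n} {x : GV n} :
    x ∈ stab ψ ↔ conjL U x ∈ stab (luApply U ψ) := by
  constructor
  · exact stab_conj_mem hU
  · intro h
    have hU' : ∀ q, star (U q) ∈ Matrix.unitaryGroup (Fin 2) ℂ :=
      fun q => Unitary.star_mem (hU q)
    have h2 := stab_conj_mem hU' h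
    rw [conjL_conjL hU, luApply_comp] at h2
    have : (fun q => star (U q) * U q) = fun _ => (1 : Matrix (Fin 2) (Fin 2) ℂ) := by
      funext q; exact Matrix.mem_unitaryGroup_iff'.mp (hU q)
    rwa [this, luApply_one] at h2

lemma gS_conj_mem {U : Fin n → Matrix (Fin 2) (Fin 2) ℂ}
    (hU : ∀ q, U q ∈ Matrix.unitaryGroup (Fin 2) ℂ) {S : Set (Fin n)} {x : GV n}
    (hx : x ∈ gS S) : conjL U x ∈ gS S := by
  obtain ⟨h1, h2⟩ := hx
  refine ⟨h1, fun q _ => ?_⟩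
  have hq := h2 q (Set.mem_univ q)
  simp only [conjL_apply]
  by_cases h : q ∈ S
  · simp only [h, if_true] at hq ⊢
    exact su2_conj (hU q) hq
  · simp only [h, if_false, SetLike.mem_coe, Submodule.mem_bot] at hq ⊢
    rw [hq, Matrix.mul_zero, Matrix.zero_mul]

lemma gS_conj_iff {U : Fin n → Matrix (Fin 2) (Fin 2) ℂ}
    (hU : ∀ q, U q ∈ Matrix.unitaryGroup (Fin 2) ℂ) {S : Set (Fin n)} {x : GV n} :
    x ∈ gS S ↔ conjL U x ∈ gS S := by
  constructor
  · exact gS_conj_mem hU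
  · intro h
    have hU' : ∀ q, star (U q) ∈ Matrix.unitaryGroup (Fin 2) ℂ :=
      fun q => Unitary.star_mem (hU q)
    have h2 := gS_conj_mem hU' h
    rwa [conjL_conjL hU] at h2

/-- Conjugation as a linear equivalence, for unitary `U`. -/
def conjE (U : Fin n → Matrix (Fin 2) (Fin 2) ℂ)
    (hU : ∀ q, U q ∈ Matrix.unitaryGroup (Fin 2) ℂ) : GV n ≃ₗ[ℝ] GV n :=
  LinearEquiv.ofLinear (conjL U) (conjL (fun q => star (U q)))
    (LinearMap.ext fun x => by
      have hU' : ∀ q, star (U q) ∈ Matrix.unitaryGroup (Fin 2) ℂ :=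
        fun q => Unitary.star_mem (hU q)
      have := conjL_conjL hU' x
      simpa using this)
    (LinearMap.ext fun x => conjL_conjL hU x)

lemma finrank_stab_conj {U : Fin n → Matrix (Fin 2) (Fin 2) ℂ}
    (hU : ∀ q, U q ∈ Matrix.unitaryGroup (Fin 2) ℂ) (ψ : QState n) (S' : Set (Fin n)) :
    Module.finrank ℝ ↥(stab (luApply U ψ) ⊓ gS S')
      = Module.finrank ℝ ↥(stab ψ ⊓ gS S') := by
  have hmap : Submodule.map (conjE U hU : GV n →ₗ[ℝ] GV n) (stab ψ ⊓ gS S')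
      = stab (luApply U ψ) ⊓ gS S' := by
    apply le_antisymm
    · rintro y ⟨x, ⟨hx1, hx2⟩, rfl⟩
      exact ⟨stab_conj_mem hU hx1, gS_conj_mem hU hx2⟩
    · rintro y ⟨hy1, hy2⟩
      have hy : conjL U ((conjE U hU).symm y) = y := (conjE U hU).apply_symm_apply y
      refine ⟨(conjE U hU).symm y, ⟨?_, ?_⟩, (conjE U hU).apply_symm_apply y⟩
      · exact (stab_conj_iff hU).mpr (by rw [hy]; exact hy1)
      · exact (gS_conj_iff hU).mpr (by rw [hy]; exact hy2)
  rw [← hmap]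
  exact LinearEquiv.finrank_map_eq (conjE U hU) (stab ψ ⊓ gS S')

lemma su2Block_luApply_iff {U : Fin n → Matrix (Fin 2) (Fin 2) ℂ}
    (hU : ∀ q, U q ∈ Matrix.unitaryGroup (Fin 2) ℂ) (ψ : QState n) (S : Set (Fin n)) :
    Su2Block (luApply U ψ) S ↔ Su2Block ψ S := by
  unfold Su2Block
  rw [finrank_stab_conj hU ψ S]
  constructor
  · rintro ⟨h1, h2⟩
    exact ⟨h1, fun S' hS' => by rw [← finrank_stab_conj hU ψ S']; exact h2 S' hS'⟩
  · rintro ⟨h1, h2⟩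
    exact ⟨h1, fun S' hS' => by rw [finrank_stab_conj hU ψ S']; exact h2 S' hS'⟩
/-- The element of `GV n` supported at qubits `j`, `k` with matrices `X`, `Y`. -/
def eS (j k : Fin n) (X Y : Matrix (Fin 2) (Fin 2) ℂ) : GV n :=
  (0, fun q => if q = j then X else if q = k then Y else 0)

lemma eS_snd_j {j k : Fin n} (X Y : Matrix (Fin 2) (Fin 2) ℂ) :
    (eS j k X Y).2 j = X := by simp [eS]

lemma eS_snd_k {j k : Fin n} (hjk : j ≠ k) (X Y : Matrix (Fin 2) (Fin 2) ℂ) :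
    (eS j k X Y).2 k = Y := by simp [eS, (Ne.symm hjk)]

lemma eS_snd_other {j k q : Fin n} (hj : q ≠ j) (hk : q ≠ k)
    (X Y : Matrix (Fin 2) (Fin 2) ℂ) : (eS j k X Y).2 q = 0 := by simp [eS, hj, hk]

lemma eS_mem_gSub {j k : Fin n} {X Y : Matrix (Fin 2) (Fin 2) ℂ}
    (hX : X ∈ su2) (hY : Y ∈ su2) : eS j k X Y ∈ gSub n := by
  refine ⟨trivial, fun q _ => ?_⟩
  show (if q = j then X else if q = k then Y else 0) ∈ su2
  split_ifs
  · exact hX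
  · exact hY
  · exact (su2).zero_mem

lemma eS_mem_gS {j k : Fin n} {X Y : Matrix (Fin 2) (Fin 2) ℂ}
    (hX : X ∈ su2) (hY : Y ∈ su2) : eS j k X Y ∈ gS ({j, k} : Set (Fin n)) := by
  refine ⟨(Submodule.mem_bot ℝ).mpr rfl, fun q _ => ?_⟩
  by_cases hq : q ∈ ({j, k} : Set (Fin n))
  · simp only [hq, if_true]
    show (if q = j then X else if q = k then Y else 0) ∈ su2
    split_ifs
    · exact hX
    · exact hY
    · exact (su2).zero_mem
  · simp only [hq, if_false, SetLike.mem_coe, Submodule.mem_bot]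
    have h1 : q ≠ j := fun h => hq (by simp [h])
    have h2 : q ≠ k := fun h => hq (by simp [h])
    exact eS_snd_other h1 h2 X Y

lemma applySingle_zero_mat (q : Fin n) (ψ : QState n) (I : Fin n → Fin 2) :
    applySingle q (0 : Matrix (Fin 2) (Fin 2) ℂ) ψ I = 0 := by
  simp [applySingle]

lemma dPhi_eS_apply {j k : Fin n} (hjk : j ≠ k) (ψ : QState n)
    (X Y : Matrix (Fin 2) (Fin 2) ℂ) (I : Fin n → Fin 2) :
    dPhi ψ (eS j k X Y) I
      = (∑ c, X (I j) c * ψ (Function.update I j c))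
        + (∑ c, Y (I k) c * ψ (Function.update I k c)) := by
  have h0 : dPhi ψ (eS j k X Y) I
      = Complex.I * ((0 : ℝ) : ℂ) * ψ I + ∑ q, applySingle q ((eS j k X Y).2 q) ψ I :=
    dPhi_apply ψ 0 _ I
  rw [h0]
  have hsum : ∑ q, applySingle q ((eS j k X Y).2 q) ψ I
      = ∑ q ∈ ({j, k} : Finset (Fin n)), applySingle q ((eS j k X Y).2 q) ψ I := by
    refine (Finset.sum_subset (Finset.subset_univ _) fun q _ hq => ?_).symm
    simp only [Finset.mem_insert, Finset.mem_singleton, not_or] at hq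
    rw [eS_snd_other hq.1 hq.2, applySingle_zero_mat]
  rw [hsum, Finset.sum_pair hjk, eS_snd_j, eS_snd_k hjk]
  simp [applySingle]

lemma mem_stab_inf_gS_iff {j k : Fin n} (hjk : j ≠ k) (ψ : QState n)
    {X Y : Matrix (Fin 2) (Fin 2) ℂ} (hX : X ∈ su2) (hY : Y ∈ su2) :
    eS j k X Y ∈ stab ψ ⊓ gS ({j, k} : Set (Fin n))
      ↔ ∀ I : Fin n → Fin 2,
        (∑ c, X (I j) c * ψ (Function.update I j c))
          + (∑ c, Y (I k) c * ψ (Function.update I k c)) = 0 := by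
  constructor
  · intro h I
    have hker : dPhi ψ (eS j k X Y) = 0 := h.1.2
    rw [← dPhi_eS_apply hjk ψ X Y I, hker]
    rfl
  · intro h
    refine ⟨⟨eS_mem_gSub hX hY, ?_⟩, eS_mem_gS hX hY⟩
    show dPhi ψ (eS j k X Y) = 0
    funext I
    rw [dPhi_eS_apply hjk ψ X Y I, h I]
    rfl

/-- Structure of elements of `stab ψ ⊓ g_{j,k}`. -/
lemma mem_inf_structure {j k : Fin n} (hjk : j ≠ k) {ψ : QState n} {x : GV n}
    (hx : x ∈ stab ψ ⊓ gS ({j, k} : Set (Fin n))) :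
    x = eS j k (x.2 j) (x.2 k) ∧ x.2 j ∈ su2 ∧ x.2 k ∈ su2 := by
  obtain ⟨hs, hg⟩ := hx
  have h1 : x.1 = 0 := (Submodule.mem_bot ℝ).mp hg.1
  have hpi := hg.2
  have hzero : ∀ q, q ≠ j → q ≠ k → x.2 q = 0 := by
    intro q hqj hqk
    have := hpi q (Set.mem_univ q)
    have hq : q ∉ ({j, k} : Set (Fin n)) := by simp [hqj, hqk]
    simpa only [hq, if_false, SetLike.mem_coe, Submodule.mem_bot] using this
  refine ⟨?_, ?_, ?_⟩
  · refine Prod.ext h1 (funext fun q => ?_)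
    show x.2 q = (if q = j then x.2 j else if q = k then x.2 k else 0)
    split_ifs with h h'
    · rw [h]
    · rw [h']
    · exact hzero q h h'
  · have := hpi j (Set.mem_univ j)
    have hj : j ∈ ({j, k} : Set (Fin n)) := by simp
    simpa only [hj, if_true, SetLike.mem_coe] using this
  · have := hpi k (Set.mem_univ k)
    have hk : k ∈ ({j, k} : Set (Fin n)) := by simp
    simpa only [hk, if_true, SetLike.mem_coe] using this

/-- Build an assignment with prescribed values at `j`, `k` and on the complement. -/
def bld (j k : Fin n) (a b : Fin 2) (c : ↥(({j, k} : Set (Fin n))ᶜ) → Fin 2) :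
    Fin n → Fin 2 :=
  fun q => if h : q = j then a else if h' : q = k then b else
    c ⟨q, by simp [Set.mem_compl_iff, Set.mem_insert_iff, Set.mem_singleton_iff, h, h']⟩

lemma bld_j {j k : Fin n} (a b : Fin 2) (c : ↥(({j, k} : Set (Fin n))ᶜ) → Fin 2) :
    bld j k a b c j = a := by simp [bld]

lemma bld_k {j k : Fin n} (hjk : j ≠ k) (a b : Fin 2)
    (c : ↥(({j, k} : Set (Fin n))ᶜ) → Fin 2) : bld j k a b c k = b := by
  simp [bld, Ne.symm hjk]

lemma bld_restr {j k : Fin n} (a b : Fin 2) (c : ↥(({j, k} : Set (Fin n))ᶜ) → Fin 2) :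
    (fun q : ↥(({j, k} : Set (Fin n))ᶜ) => bld j k a b c q.1) = c := by
  funext q
  have hq := q.2
  simp only [Set.mem_compl_iff, Set.mem_insert_iff, Set.mem_singleton_iff, not_or] at hq
  simp [bld, hq.1, hq.2]

lemma restr_update_j {j k : Fin n} (I : Fin n → Fin 2) (c : Fin 2) :
    (fun q : ↥(({j, k} : Set (Fin n))ᶜ) => Function.update I j c q.1)
      = fun q : ↥(({j, k} : Set (Fin n))ᶜ) => I q.1 := by
  funext q
  have hq := q.2
  simp only [Set.mem_compl_iff, Set.mem_insert_iff, Set.mem_singleton_iff, not_or] at hq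
  exact Function.update_of_ne hq.1 c I

lemma restr_update_k {j k : Fin n} (I : Fin n → Fin 2) (c : Fin 2) :
    (fun q : ↥(({j, k} : Set (Fin n))ᶜ) => Function.update I k c q.1)
      = fun q : ↥(({j, k} : Set (Fin n))ᶜ) => I q.1 := by
  funext q
  have hq := q.2
  simp only [Set.mem_compl_iff, Set.mem_insert_iff, Set.mem_singleton_iff, not_or] at hq
  exact Function.update_of_ne hq.2 c I
/-- The real matrix `s = [[0,1],[-1,0]] ∈ su(2)`. -/
def sMat : Matrix (Fin 2) (Fin 2) ℂ := !![0, 1; -1, 0]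

lemma sMat_mem : sMat ∈ su2 := by
  constructor
  · ext a b
    fin_cases a <;> fin_cases b <;> simp [sMat, Matrix.conjTranspose_apply]
  · simp [sMat, Matrix.trace_fin_two]

lemma singlet_key {X : Matrix (Fin 2) (Fin 2) ℂ} (htr : X.trace = 0) (a b : Fin 2) :
    (∑ c, X a c * singletFn c b) + (∑ c, X b c * singletFn a c) = 0 := by
  rw [Matrix.trace_fin_two] at htr
  fin_cases a <;> fin_cases b <;> simp [Fin.sum_univ_two, singletFn] <;>
    first
      | linear_combination htr
      | linear_combination -htr
      | linear_combination 2 * htr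
      | linear_combination -2 * htr

lemma block_of_singlet {j k : Fin n} (hjk : j ≠ k)
    (χ : (↥(({j, k} : Set (Fin n))ᶜ) → Fin 2) → ℂ) (hχ : χ ≠ 0) (ψ' : QState n)
    (hform : ∀ I : Fin n → Fin 2, ψ' I = singletFn (I j) (I k) * χ (fun q => I q.1)) :
    Su2Block ψ' ({j, k} : Set (Fin n)) := by
  -- membership of diagonal elements
  have hmem : ∀ X ∈ su2, eS j k X X ∈ stab ψ' ⊓ gS ({j, k} : Set (Fin n)) := by
    intro X hX
    rw [mem_stab_inf_gS_iff hjk ψ' hX hX]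
    intro I
    have h1 : ∀ c, ψ' (Function.update I j c)
        = singletFn c (I k) * χ (fun q => I q.1) := by
      intro c
      rw [hform]
      rw [Function.update_self, Function.update_of_ne (Ne.symm hjk), restr_update_j]
    have h2 : ∀ c, ψ' (Function.update I k c)
        = singletFn (I j) c * χ (fun q => I q.1) := by
      intro c
      rw [hform]
      rw [Function.update_self, Function.update_of_ne hjk, restr_update_k]
    simp only [h1, h2]
    have := singlet_key hX.2 (I j) (I k)
    calc (∑ c, X (I j) c * (singletFn c (I k) * χ fun q => I q.1))
          + (∑ c, X (I k) c * (singletFn (I j) c * χ fun q => I q.1))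
        = ((∑ c, X (I j) c * singletFn c (I k))
          + (∑ c, X (I k) c * singletFn (I j) c)) * χ (fun q => I q.1) := by
          rw [add_mul, Finset.sum_mul, Finset.sum_mul]
          congr 1 <;> exact Finset.sum_congr rfl fun c _ => by ring
      _ = 0 := by rw [this, zero_mul]
  constructor
  · -- rank > 1
    have hv1 := hmem matA matA_mem
    have hv2 := hmem sMat sMat_mem
    have hli : LinearIndependent ℝ ![eS j k matA matA, eS j k sMat sMat] := by
      rw [LinearIndependent.pair_iff]
      intro s t hst
      have h00 := congrFun (congrFun (congrArg (fun x : GV n => x.2 j) hst) 0) 0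
      have h01 := congrFun (congrFun (congrArg (fun x : GV n => x.2 j) hst) 0) 1
      simp only [Prod.fst_add, Prod.snd_add, Prod.smul_snd, Pi.add_apply, Pi.smul_apply,
        eS_snd_j, Matrix.add_apply, Matrix.smul_apply, matA, sMat, Prod.snd_zero,
        Pi.zero_apply, Matrix.zero_apply] at h00 h01
      norm_num [Matrix.cons_val_zero, Matrix.cons_val_one, Matrix.head_cons,
        Complex.real_smul] at h00 h01
      exact ⟨by exact_mod_cast h00, by exact_mod_cast h01⟩
    have hspan : Submodule.span ℝ (Set.range ![eS j k matA matA, eS j k sMat sMat])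
        ≤ stab ψ' ⊓ gS ({j, k} : Set (Fin n)) := by
      rw [Submodule.span_le]
      rintro x ⟨i, rfl⟩
      fin_cases i
      · exact hv1
      · exact hv2
    have h2 : (2 : ℕ) ≤ Module.finrank ℝ ↥(stab ψ' ⊓ gS ({j, k} : Set (Fin n))) := by
      have := finrank_span_eq_card hli
      calc (2 : ℕ) = Module.finrank ℝ
            ↥(Submodule.span ℝ (Set.range ![eS j k matA matA, eS j k sMat sMat])) := by
            rw [this]; simp
        _ ≤ _ := Submodule.finrank_mono hspan
    omega
  · -- minimality
    intro S' hS'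
    have hbot : stab ψ' ⊓ gS S' = ⊥ := by
      rw [eq_bot_iff]
      intro x hx
      obtain ⟨hs, hg⟩ := hx
      have h1 : x.1 = 0 := (Submodule.mem_bot ℝ).mp hg.1
      have hzero : ∀ q, q ∉ S' → x.2 q = 0 := by
        intro q hq
        have := hg.2 q (Set.mem_univ q)
        simpa only [hq, if_false, SetLike.mem_coe, Submodule.mem_bot] using this
      obtain ⟨c₀, hc₀0⟩ := Function.ne_iff.mp hχ
      have hc₀' : χ c₀ ≠ 0 := by simpa using hc₀0
      have hsub : S' ⊆ {j, k} := hS'.1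
      have hmiss : j ∉ S' ∨ k ∉ S' := by
        by_contra h
        push_neg at h
        exact hS'.2 (fun q hq => by
          rcases hq with hq | hq
          · exact hq ▸ h.1
          · rw [Set.mem_singleton_iff] at hq; exact hq ▸ h.2)
      have hker : dPhi ψ' (x.1, x.2) = 0 := hs.2
      rw [Submodule.mem_bot]
      rcases hmiss with hmj | hmk
      · -- only k can be active
        have hzq : ∀ q, q ≠ k → x.2 q = 0 := by
          intro q hq
          by_cases h : q ∈ S'
          · rcases hsub h with h' | h'
            · rw [h'] at h; exact absurd h hmj
            · rw [Set.mem_singleton_iff] at h'; exact absurd h' hq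
          · exact hzero q h
        have hcond : ∀ I : Fin n → Fin 2,
            ∑ c, x.2 k (I k) c * ψ' (Function.update I k c) = 0 := by
          intro I
          have := congrFun hker I
          rw [dPhi_apply, h1] at this
          simp only [Complex.ofReal_zero, mul_zero, zero_mul, zero_add] at this
          rw [Finset.sum_eq_single k (fun q _ hq => by
            rw [hzq q hq]; exact applySingle_zero_mat q ψ' I) (fun h => absurd (Finset.mem_univ k) h)] at this
          simpa [applySingle] using this
        have hYab : ∀ a b : Fin 2, ∑ c, x.2 k b c * singletFn a c = 0 := by
          intro a b
          have := hcond (bld j k a b c₀)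
          have heval : ∀ c, ψ' (Function.update (bld j k a b c₀) k c)
              = singletFn a c * χ c₀ := by
            intro c
            rw [hform, Function.update_self, Function.update_of_ne hjk, bld_j,
              restr_update_k, bld_restr]
          rw [bld_k hjk] at this
          simp only [heval] at this
          have hfac : (∑ c, x.2 k b c * singletFn a c) * χ c₀ = 0 := by
            calc (∑ c, x.2 k b c * singletFn a c) * χ c₀
                = ∑ c, x.2 k b c * (singletFn a c * χ c₀) := by
                  rw [Finset.sum_mul]
                  exact Finset.sum_congr rfl fun c _ => by ring
              _ = 0 := this
          exact (mul_eq_zero.mp hfac).resolve_right hc₀'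
        have hY : x.2 k = 0 := by
          ext b c
          fin_cases c
          · have := hYab 1 b
            simpa [Fin.sum_univ_two, singletFn] using this
          · have := hYab 0 b
            simpa [Fin.sum_univ_two, singletFn] using this
        refine Prod.ext h1 (funext fun q => ?_)
        by_cases hq : q = k
        · rw [hq, hY]; rfl
        · rw [hzq q hq]; rfl
      · -- only j can be active
        have hzq : ∀ q, q ≠ j → x.2 q = 0 := by
          intro q hq
          by_cases h : q ∈ S'
          · rcases hsub h with h' | h'
            · exact absurd h' hq
            · rw [Set.mem_singleton_iff] at h'; rw [h'] at h; exact absurd h hmk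
          · exact hzero q h
        have hcond : ∀ I : Fin n → Fin 2,
            ∑ c, x.2 j (I j) c * ψ' (Function.update I j c) = 0 := by
          intro I
          have := congrFun hker I
          rw [dPhi_apply, h1] at this
          simp only [Complex.ofReal_zero, mul_zero, zero_mul, zero_add] at this
          rw [Finset.sum_eq_single j (fun q _ hq => by
            rw [hzq q hq]; exact applySingle_zero_mat q ψ' I) (fun h => absurd (Finset.mem_univ j) h)] at this
          simpa [applySingle] using this
        have hXab : ∀ a b : Fin 2, ∑ c, x.2 j b c * singletFn c a = 0 := by
          intro a b
          have := hcond (bld j k b a c₀)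
          have heval : ∀ c, ψ' (Function.update (bld j k b a c₀) j c)
              = singletFn c a * χ c₀ := by
            intro c
            rw [hform, Function.update_self, Function.update_of_ne (Ne.symm hjk),
              bld_k hjk, restr_update_j, bld_restr]
          rw [bld_j] at this
          simp only [heval] at this
          have hfac : (∑ c, x.2 j b c * singletFn c a) * χ c₀ = 0 := by
            calc (∑ c, x.2 j b c * singletFn c a) * χ c₀
                = ∑ c, x.2 j b c * (singletFn c a * χ c₀) := by
                  rw [Finset.sum_mul]
                  exact Finset.sum_congr rfl fun c _ => by ring
              _ = 0 := this
          exact (mul_eq_zero.mp hfac).resolve_right hc₀'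
        have hX : x.2 j = 0 := by
          ext b c
          fin_cases c
          · have := hXab 1 b
            simpa [Fin.sum_univ_two, singletFn] using this
          · have := hXab 0 b
            simpa [Fin.sum_univ_two, singletFn] using this
        refine Prod.ext h1 (funext fun q => ?_)
        by_cases hq : q = j
        · rw [hq, hX]; rfl
        · rw [hzq q hq]; rfl
    rw [hbot]
    exact finrank_bot ℝ (GV n)
lemma su2_diag {X : Matrix (Fin 2) (Fin 2) ℂ} (hX : X ∈ su2) (hX0 : X ≠ 0) :
    ∃ U ∈ Matrix.unitaryGroup (Fin 2) ℂ, ∃ lam : ℝ, lam ≠ 0 ∧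
      star U * X * U = lam • matA := by
  set H : Matrix (Fin 2) (Fin 2) ℂ := (-Complex.I) • X with hH_def
  have hH : H.IsHermitian := by
    show Hᴴ = H
    rw [hH_def, Matrix.conjTranspose_smul, hX.1]
    simp
  set V : Matrix (Fin 2) (Fin 2) ℂ := (hH.eigenvectorUnitary : Matrix (Fin 2) (Fin 2) ℂ)
    with hV_def
  have hVu : V ∈ Matrix.unitaryGroup (Fin 2) ℂ := hH.eigenvectorUnitary.2
  have hVV : star V * V = 1 := Matrix.mem_unitaryGroup_iff'.mp hVu
  have hspec := hH.spectral_theorem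
  have hdiag : star V * H * V = Matrix.diagonal (RCLike.ofReal ∘ hH.eigenvalues) := by
    conv_lhs => rw [hspec]
    calc star V * (V * Matrix.diagonal (RCLike.ofReal ∘ hH.eigenvalues) * star V) * V
        = (star V * V) * Matrix.diagonal (RCLike.ofReal ∘ hH.eigenvalues) * (star V * V) := by
          simp only [Matrix.mul_assoc]
      _ = _ := by rw [hVV, Matrix.one_mul, Matrix.mul_one]
  have htr : hH.eigenvalues 0 + hH.eigenvalues 1 = 0 := by
    have h1 : H.trace = 0 := by
      rw [hH_def, Matrix.trace_smul, hX.2, smul_zero]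
    have h2 : H.trace = (hH.eigenvalues 0 : ℂ) + (hH.eigenvalues 1 : ℂ) := by
      conv_lhs => rw [hspec]
      rw [Unitary.conjStarAlgAut_apply, ← hV_def, Matrix.trace_mul_cycle, hVV, Matrix.one_mul, Matrix.trace_diagonal]
      simp [Fin.sum_univ_two]
    rw [h1] at h2
    exact_mod_cast h2.symm
  refine ⟨V, hVu, hH.eigenvalues 0, ?_, ?_⟩
  · intro h0
    have h1 : hH.eigenvalues 1 = 0 := by linarith
    have hD : Matrix.diagonal (RCLike.ofReal ∘ hH.eigenvalues)
        = (0 : Matrix (Fin 2) (Fin 2) ℂ) := by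
      ext a b
      by_cases hab : a = b
      · subst hab
        fin_cases a <;> simp [Matrix.diagonal, h0, h1]
      · simp [Matrix.diagonal_apply_ne _ hab]
    have hHzero : H = 0 := by rw [hspec, hD, map_zero]
    have : X = 0 := by
      have := congrArg (fun M => Complex.I • M) hHzero
      simpa [hH_def, smul_smul] using this
    exact hX0 this
  · have hXH : X = Complex.I • H := by
      rw [hH_def, smul_smul]
      simp
    rw [hXH]
    have : star V * (Complex.I • H) * V = Complex.I • (star V * H * V) := by
      rw [Matrix.mul_smul, Matrix.smul_mul]
    rw [this, hdiag]
    have h1 : hH.eigenvalues 1 = -(hH.eigenvalues 0) := by linarith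
    ext a b
    fin_cases a <;> fin_cases b <;>
      simp [Matrix.smul_apply, Matrix.diagonal_apply, matA, Complex.real_smul, h1] <;>
      push_cast <;> ring
lemma luApply_single (j : Fin n) (M : Matrix (Fin 2) (Fin 2) ℂ) (ψ : QState n)
    (I : Fin n → Fin 2) :
    luApply (fun q => if q = j then M else 1) ψ I
      = ∑ c, M (I j) c * ψ (Function.update I j c) := by
  rw [luApply]
  rw [← Finset.sum_subset
    (Finset.subset_univ ((Finset.univ : Finset (Fin 2)).image (Function.update I j)))]
  · rw [Finset.sum_image (fun c _ c' _ h => by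
      have := congrFun h j
      simpa [Function.update_self] using this)]
    refine Finset.sum_congr rfl fun c _ => ?_
    congr 1
    rw [← Finset.mul_prod_erase Finset.univ _ (Finset.mem_univ j)]
    have h1 : (if j = j then M else 1) (I j) (Function.update I j c j) = M (I j) c := by
      simp
    rw [h1]
    have h2 : ∏ q ∈ Finset.univ.erase j,
        (if q = j then M else (1 : Matrix (Fin 2) (Fin 2) ℂ)) (I q) (Function.update I j c q)
        = 1 := by
      refine Finset.prod_eq_one fun q hq => ?_
      have hqj := Finset.ne_of_mem_erase hq
      rw [if_neg hqj, Function.update_of_ne hqj, Matrix.one_apply_eq]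
    rw [h2, mul_one]
  · intro J _ hJ
    have hex : ∃ q, q ≠ j ∧ J q ≠ I q := by
      by_contra h
      push_neg at h
      refine hJ (Finset.mem_image.mpr ⟨J j, Finset.mem_univ _, ?_⟩)
      funext q
      by_cases hq : q = j
      · rw [hq, Function.update_self]
      · rw [Function.update_of_ne hq]
        exact (h q hq).symm
    obtain ⟨q, hqj, hval⟩ := hex
    refine mul_eq_zero_of_left (Finset.prod_eq_zero (Finset.mem_univ q) ?_) _
    rw [if_neg hqj]
    exact Matrix.one_apply_ne (fun h => hval h.symm)

lemma eS_smul (j k : Fin n) (r : ℝ) (X Y : Matrix (Fin 2) (Fin 2) ℂ) :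
    r • eS j k X Y = eS j k (r • X) (r • Y) := by
  refine Prod.ext (by simp [eS]) (funext fun q => ?_)
  show r • (if q = j then X else if q = k then Y else 0)
      = (if q = j then r • X else if q = k then r • Y else 0)
  split_ifs <;> simp

/-- Pauli `σx`. -/
def sx : Matrix (Fin 2) (Fin 2) ℂ := !![0, 1; 1, 0]

lemma sx_unitary : sx ∈ Matrix.unitaryGroup (Fin 2) ℂ := by
  rw [Matrix.mem_unitaryGroup_iff]
  ext a b
  fin_cases a <;> fin_cases b <;>
    simp [sx, Matrix.mul_apply, Fin.sum_univ_two, Matrix.conjTranspose_apply,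
      Matrix.star_eq_conjTranspose]

lemma star_sx : star sx = sx := by
  rw [Matrix.star_eq_conjTranspose]
  ext a b
  fin_cases a <;> fin_cases b <;> simp [sx, Matrix.conjTranspose_apply]

lemma sx_matA_sx : sx * matA * star sx = -matA := by
  rw [star_sx]
  ext a b
  fin_cases a <;> fin_cases b <;>
    simp [sx, matA, Matrix.mul_apply, Fin.sum_univ_two]

lemma one_unitary : (1 : Matrix (Fin 2) (Fin 2) ℂ) ∈ Matrix.unitaryGroup (Fin 2) ℂ := by
  rw [Matrix.mem_unitaryGroup_iff]; simp

/-- sign function on `Fin 2` as complex numbers -/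
def sgn : Fin 2 → ℂ := fun a => if a = 0 then 1 else -1

lemma diag_sum (lam : ℝ) (a : Fin 2) (f : Fin 2 → ℂ) :
    ∑ c, (lam • matA) a c * f c = (lam : ℂ) * sgn a * Complex.I * f a := by
  fin_cases a <;>
    simp [matA, Fin.sum_univ_two, sgn, Matrix.smul_apply, Complex.real_smul] <;> ring

lemma bld_update_j {j k : Fin n} (hjk : j ≠ k) (a b c' : Fin 2)
    (c : ↥(({j, k} : Set (Fin n))ᶜ) → Fin 2) :
    Function.update (bld j k a b c) j c' = bld j k c' b c := by
  funext q
  by_cases hq : q = j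
  · subst hq; rw [Function.update_self, bld_j]
  · rw [Function.update_of_ne hq]
    simp only [bld, dif_neg hq]

lemma bld_update_k {j k : Fin n} (hjk : j ≠ k) (a b c' : Fin 2)
    (c : ↥(({j, k} : Set (Fin n))ᶜ) → Fin 2) :
    Function.update (bld j k a b c) k c' = bld j k a c' c := by
  funext q
  by_cases hq : q = k
  · subst hq; rw [Function.update_self, bld_k hjk]
  · rw [Function.update_of_ne hq]
    by_cases hqj : q = j
    · subst hqj; rw [bld_j, bld_j]
    · simp only [bld, dif_neg hqj, dif_neg hq]

lemma bld_eta {j k : Fin n} (I : Fin n → Fin 2) :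
    bld j k (I j) (I k) (fun q : ↥(({j, k} : Set (Fin n))ᶜ) => I q.1) = I := by
  funext q
  by_cases hq : q = j
  · subst hq; exact bld_j _ _ _
  · by_cases hq' : q = k
    · subst hq'; simp [bld, hq]
    · simp [bld, hq, hq']

lemma zero_of_finrank_zero {p : Submodule ℝ (GV n)}
    (hfr : Module.finrank ℝ ↥p = 0) {x : GV n} (hx : x ∈ p) : x = 0 := by
  by_contra h0
  have h1 : Submodule.span ℝ {x} ≤ p := by
    rw [Submodule.span_le, Set.singleton_subset_iff]; exact hx
  have h2 : (1 : ℕ) ≤ Module.finrank ℝ ↥p := by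
    calc (1 : ℕ) = Module.finrank ℝ ↥(Submodule.span ℝ {x}) := (finrank_span_singleton h0).symm
      _ ≤ _ := Submodule.finrank_mono h1
  omega

/-- An element with vanishing off-diagonals and matching diagonal lies in the span of
the diagonal stabilizer element. -/
lemma mem_span_elt3 {j k : Fin n} (hjk : j ≠ k) {lam : ℝ} (hlam : lam ≠ 0)
    {X Y : Matrix (Fin 2) (Fin 2) ℂ} (hX : X ∈ su2) (hY : Y ∈ su2)
    (hX01 : X 0 1 = 0) (hY01 : Y 0 1 = 0) (hXY : Y 0 0 = X 0 0) :
    eS j k X Y ∈ Submodule.span ℝ {eS j k (lam • matA) (lam • matA)} := by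
  rw [Submodule.mem_span_singleton]
  refine ⟨(X 0 0).im / lam, ?_⟩
  rw [eS_smul]
  have hdiag : ((X 0 0).im / lam) • (lam • matA) = ((X 0 0).im : ℝ) • matA := by
    rw [smul_smul, div_mul_cancel₀ _ hlam]
  rw [hdiag]
  have hmat : ∀ Z : Matrix (Fin 2) (Fin 2) ℂ, Z ∈ su2 → Z 0 1 = 0 → Z 0 0 = X 0 0 →
      ((X 0 0).im : ℝ) • matA = Z := by
    intro Z hZ h01 h00
    have h10 : Z 1 0 = 0 := by rw [su2_10 hZ, h01]; simp
    have h11 : Z 1 1 = -Z 0 0 := su2_11 hZ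
    have hZ00 : Z 0 0 = ((X 0 0).im : ℂ) * Complex.I := h00.trans (su2_00_eq hX)
    ext a b
    fin_cases a <;> fin_cases b <;>
      simp [matA, Matrix.smul_apply, Complex.real_smul, hZ00, h01, h10, h11] <;> ring
  exact congrArg₂ (fun A B => eS j k A B) (hmat X hX hX01 rfl) (hmat Y hY hY01 hXY)
lemma sgn_ne_zero (a : Fin 2) : sgn a ≠ 0 := by
  unfold sgn; split_ifs <;> norm_num

lemma fin2_cases (a : Fin 2) : a = 0 ∨ a = 1 := by omega

lemma sgn_ne {a b : Fin 2} (h : a ≠ b) : sgn a = -sgn b := by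
  rcases fin2_cases a with ha | ha <;> rcases fin2_cases b with hb | hb <;>
    subst ha <;> subst hb <;> simp [sgn] at h ⊢

lemma normalize_block {ψ : QState n} (hψ : ψ ≠ 0) {j k : Fin n} (hjk : j ≠ k)
    (hblock : Su2Block ψ ({j, k} : Set (Fin n))) :
    ∃ (V : Fin n → Matrix (Fin 2) (Fin 2) ℂ) (lam : ℝ),
      (∀ q, V q ∈ Matrix.unitaryGroup (Fin 2) ℂ) ∧ lam ≠ 0 ∧
      eS j k (lam • matA) (lam • matA) ∈ stab (luApply V ψ) ∧
      (∀ I : Fin n → Fin 2, I j = I k → luApply V ψ I = 0) := by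
  classical
  -- pick a nonzero element of the stabilizer intersection
  have hWne : stab ψ ⊓ gS ({j, k} : Set (Fin n)) ≠ ⊥ := by
    intro h
    have := hblock.1
    rw [h] at this
    rw [finrank_bot ℝ (GV n)] at this
    omega
  obtain ⟨w₁, hw₁W, hw₁0⟩ := Submodule.exists_mem_ne_zero_of_ne_bot hWne
  obtain ⟨hw₁eq, hXsu, hYsu⟩ := mem_inf_structure hjk hw₁W
  -- the singleton sets are proper subsets
  have hsub_j : ({j} : Set (Fin n)) ⊂ {j, k} := by
    constructor
    · intro q hq; rw [Set.mem_singleton_iff] at hq; subst hq; exact Set.mem_insert q _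
    · intro h
      have := h (Set.mem_insert_of_mem j (Set.mem_singleton k))
      rw [Set.mem_singleton_iff] at this
      exact hjk this.symm
  have hsub_k : ({k} : Set (Fin n)) ⊂ {j, k} := by
    constructor
    · intro q hq; rw [Set.mem_singleton_iff] at hq; subst hq
      exact Set.mem_insert_of_mem j rfl
    · intro h
      have := h (Set.mem_insert j _)
      rw [Set.mem_singleton_iff] at this
      exact hjk this
  have hw₁1 : w₁.1 = 0 := by rw [hw₁eq]; rfl
  -- the two matrix components are nonzero
  have hX0 : w₁.2 j ≠ 0 := by
    intro h0
    apply hw₁0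
    refine zero_of_finrank_zero (hblock.2 {k} hsub_k) ⟨hw₁W.1, ?_⟩
    refine ⟨(Submodule.mem_bot ℝ).mpr hw₁1, fun q _ => ?_⟩
    by_cases hq : q ∈ ({k} : Set (Fin n))
    · rw [Set.mem_singleton_iff] at hq
      simp only [hq, Set.mem_singleton_iff, if_true]
      exact hq ▸ hYsu
    · rw [Set.mem_singleton_iff] at hq
      simp only [Set.mem_singleton_iff, hq, if_false, SetLike.mem_coe, Submodule.mem_bot]
      by_cases hqj : q = j
      · rw [hqj]; exact h0
      · rw [hw₁eq]; exact eS_snd_other hqj hq _ _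
  have hY0 : w₁.2 k ≠ 0 := by
    intro h0
    apply hw₁0
    refine zero_of_finrank_zero (hblock.2 {j} hsub_j) ⟨hw₁W.1, ?_⟩
    refine ⟨(Submodule.mem_bot ℝ).mpr hw₁1, fun q _ => ?_⟩
    by_cases hq : q ∈ ({j} : Set (Fin n))
    · rw [Set.mem_singleton_iff] at hq
      simp only [hq, Set.mem_singleton_iff, if_true]
      exact hq ▸ hXsu
    · rw [Set.mem_singleton_iff] at hq
      simp only [Set.mem_singleton_iff, hq, if_false, SetLike.mem_coe, Submodule.mem_bot]
      by_cases hqk : q = k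
      · rw [hqk]; exact h0
      · rw [hw₁eq]; exact eS_snd_other hq hqk _ _
  -- diagonalize
  obtain ⟨Uj, hUj, lamj, hlamj, hXdiag⟩ := su2_diag hXsu hX0
  obtain ⟨Uk, hUk, lamk, hlamk, hYdiag⟩ := su2_diag hYsu hY0
  set Ufam : Fin n → Matrix (Fin 2) (Fin 2) ℂ :=
    fun q => if q = j then star Uj else if q = k then star Uk else 1 with hUfam_def
  have hUfam : ∀ q, Ufam q ∈ Matrix.unitaryGroup (Fin 2) ℂ := by
    intro q
    rw [hUfam_def]
    dsimp only
    split_ifs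
    · exact Unitary.star_mem hUj
    · exact Unitary.star_mem hUk
    · exact one_unitary
  set ψ₂ : QState n := luApply Ufam ψ with hψ₂_def
  have hψ₂0 : ψ₂ ≠ 0 := luApply_ne_zero Ufam hUfam ψ hψ
  have helt2 : eS j k (lamj • matA) (lamk • matA) ∈ stab ψ₂ := by
    have h1 := stab_conj_mem hUfam hw₁W.1
    have h2 : conjL Ufam w₁ = eS j k (lamj • matA) (lamk • matA) := by
      refine Prod.ext (by rw [conjL_apply]; exact hw₁1) (funext fun q => ?_)
      rw [conjL_apply]
      show Ufam q * w₁.2 q * star (Ufam q) = (eS j k (lamj • matA) (lamk • matA)).2 q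
      by_cases hq : q = j
      · subst hq
        rw [show Ufam q = star Uj from by simp [hUfam_def]]
        rw [star_star, eS_snd_j]
        exact hXdiag
      · by_cases hq' : q = k
        · subst hq'
          rw [show Ufam q = star Uk from by simp [hUfam_def, hq]]
          rw [star_star, eS_snd_k hjk]
          exact hYdiag
        · rw [show Ufam q = 1 from by simp [hUfam_def, hq, hq']]
          rw [hw₁eq, eS_snd_other hq hq', eS_snd_other hq hq']
          simp
    rwa [h2] at h1
  have hcond2 : ∀ I : Fin n → Fin 2,
      ((lamj : ℂ) * sgn (I j) + (lamk : ℂ) * sgn (I k)) * Complex.I * ψ₂ I = 0 := by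
    intro I
    have hker : dPhi ψ₂ (eS j k (lamj • matA) (lamk • matA)) = 0 := helt2.2
    have h := congrFun hker I
    rw [dPhi_eS_apply hjk] at h
    rw [diag_sum lamj (I j) (fun c => ψ₂ (Function.update I j c)),
      diag_sum lamk (I k) (fun c => ψ₂ (Function.update I k c))] at h
    rw [Function.update_eq_self, Function.update_eq_self] at h
    have h0 : (0 : QState n) I = 0 := rfl
    rw [h0] at h
    linear_combination h
  obtain ⟨I₀, hI₀⟩ : ∃ I, ψ₂ I ≠ 0 := by
    by_contra h
    push_neg at h
    exact hψ₂0 (funext fun I => h I)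
  have hco : (lamj : ℂ) * sgn (I₀ j) + (lamk : ℂ) * sgn (I₀ k) = 0 := by
    have := hcond2 I₀
    rcases mul_eq_zero.mp this with h | h
    · rcases mul_eq_zero.mp h with h' | h'
      · exact h'
      · exact absurd h' Complex.I_ne_zero
    · exact absurd h hI₀
  by_cases heq : I₀ j = I₀ k
  · -- lamk = -lamj; apply σx on qubit k
    have hlk : lamk = -lamj := by
      rw [heq] at hco
      have h1 : ((lamj : ℂ) + lamk) * sgn (I₀ k) = 0 := by linear_combination hco
      have h2 : (lamj : ℂ) + lamk = 0 :=
        (mul_eq_zero.mp h1).resolve_right (sgn_ne_zero _)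
      have : lamj + lamk = 0 := by exact_mod_cast h2
      linarith
    have hsupp2 : ∀ I : Fin n → Fin 2, I j ≠ I k → ψ₂ I = 0 := by
      intro I hne
      have h := hcond2 I
      have hcoeff : (lamj : ℂ) * sgn (I j) + (lamk : ℂ) * sgn (I k) ≠ 0 := by
        have hs := sgn_ne hne
        rw [hlk]
        push_cast
        rw [hs]
        intro h0
        have h2 : (2 : ℂ) * lamj * sgn (I k) = 0 := by linear_combination -h0
        have h3 := (mul_eq_zero.mp h2).resolve_right (sgn_ne_zero _)
        rcases mul_eq_zero.mp h3 with h4 | h4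
        · norm_num at h4
        · exact hlamj (by exact_mod_cast h4)
      rcases mul_eq_zero.mp h with h' | h'
      · rcases mul_eq_zero.mp h' with h'' | h''
        · exact absurd h'' hcoeff
        · exact absurd h'' Complex.I_ne_zero
      · exact h'
    set Bfam : Fin n → Matrix (Fin 2) (Fin 2) ℂ := fun q => if q = k then sx else 1
      with hBfam_def
    have hBfam : ∀ q, Bfam q ∈ Matrix.unitaryGroup (Fin 2) ℂ := by
      intro q
      rw [hBfam_def]
      dsimp only
      split_ifs
      · exact sx_unitary
      · exact one_unitary
    refine ⟨fun q => Bfam q * Ufam q, lamj, fun q => mul_mem (hBfam q) (hUfam q), hlamj,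
      ?_, ?_⟩
    · rw [← luApply_comp]
      have h1 := stab_conj_mem hBfam helt2
      have h2 : conjL Bfam (eS j k (lamj • matA) (lamk • matA))
          = eS j k (lamj • matA) (lamj • matA) := by
        refine Prod.ext (by rw [conjL_apply]; rfl) (funext fun q => ?_)
        rw [conjL_apply]
        show Bfam q * (eS j k (lamj • matA) (lamk • matA)).2 q * star (Bfam q)
            = (eS j k (lamj • matA) (lamj • matA)).2 q
        by_cases hq : q = k
        · subst hq
          rw [show Bfam q = sx from by simp [hBfam_def]]
          rw [eS_snd_k hjk, eS_snd_k hjk]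
          rw [Matrix.mul_smul, Matrix.smul_mul, sx_matA_sx, hlk]
          ext a b
          simp
        · by_cases hq' : q = j
          · subst hq'
            rw [show Bfam q = 1 from by simp [hBfam_def, hq]]
            rw [eS_snd_j, eS_snd_j]
            simp
          · rw [show Bfam q = 1 from by simp [hBfam_def, hq]]
            rw [eS_snd_other hq' hq, eS_snd_other hq' hq]
            simp
      rwa [h2] at h1
    · intro I hIjk
      rw [← luApply_comp]
      have hlu : luApply Bfam ψ₂ I = ∑ c, sx (I k) c * ψ₂ (Function.update I k c) := by
        rw [hBfam_def]
        exact luApply_single k sx ψ₂ I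
      rw [hlu, Fin.sum_univ_two]
      have hupd : ∀ c : Fin 2, c ≠ I k → ψ₂ (Function.update I k c) = 0 := by
        intro c hc
        refine hsupp2 _ ?_
        rw [Function.update_of_ne hjk, Function.update_self, hIjk]
        exact fun h => hc h.symm
      rcases fin2_cases (I k) with h | h <;> rw [h]
      · rw [hupd 1 (by rw [h]; decide)]
        simp [sx]
      · rw [hupd 0 (by rw [h]; decide)]
        simp [sx]
  · -- lamk = lamj; no extra rotation needed
    have hlk : lamk = lamj := by
      have hs : sgn (I₀ k) = -sgn (I₀ j) := sgn_ne (Ne.symm heq)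
      rw [hs] at hco
      have h1 : ((lamj : ℂ) - lamk) * sgn (I₀ j) = 0 := by linear_combination hco
      have h2 : (lamj : ℂ) - lamk = 0 :=
        (mul_eq_zero.mp h1).resolve_right (sgn_ne_zero _)
      have : lamj - lamk = 0 := by exact_mod_cast h2
      linarith
    refine ⟨Ufam, lamj, hUfam, hlamj, by rwa [hlk] at helt2, ?_⟩
    intro I hIjk
    have h := hcond2 I
    have hcoeff : (lamj : ℂ) * sgn (I j) + (lamk : ℂ) * sgn (I k) ≠ 0 := by
      rw [hlk, hIjk]
      have h1 : (lamj : ℂ) * sgn (I k) + (lamj : ℂ) * sgn (I k)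
          = 2 * lamj * sgn (I k) := by ring
      rw [h1]
      refine mul_ne_zero (mul_ne_zero two_ne_zero ?_) (sgn_ne_zero _)
      exact_mod_cast hlamj
    rcases mul_eq_zero.mp h with h' | h'
    · rcases mul_eq_zero.mp h' with h'' | h''
      · exact absurd h'' hcoeff
      · exact absurd h'' Complex.I_ne_zero
    · exact h'
lemma singlet_of_block {ψ : QState n} (hψ : ψ ≠ 0) {j k : Fin n} (hjk : j ≠ k)
    (hblock : Su2Block ψ ({j, k} : Set (Fin n))) : HasSingletFactor ψ := by
  classical
  obtain ⟨V, lam, hV, hlam, helt, hsupp⟩ := normalize_block hψ hjk hblock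
  set ψ₃ : QState n := luApply V ψ with hψ₃_def
  have hψ₃0 : ψ₃ ≠ 0 := luApply_ne_zero V hV ψ hψ
  have hblock₃ : Su2Block ψ₃ ({j, k} : Set (Fin n)) :=
    (su2Block_luApply_iff hV ψ _).mpr hblock
  -- the two branch amplitudes
  set φ₀ : (↥(({j, k} : Set (Fin n))ᶜ) → Fin 2) → ℂ := fun c => ψ₃ (bld j k 0 1 c)
    with hφ₀_def
  set φ₁ : (↥(({j, k} : Set (Fin n))ᶜ) → Fin 2) → ℂ := fun c => ψ₃ (bld j k 1 0 c)
    with hφ₁_def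
  have hstruct : ∀ I : Fin n → Fin 2,
      ψ₃ I = (if I j = 0 ∧ I k = 1 then φ₀ (fun q => I q.1)
        else if I j = 1 ∧ I k = 0 then φ₁ (fun q => I q.1) else 0) := by
    intro I
    rcases fin2_cases (I j) with hj | hj <;> rcases fin2_cases (I k) with hk | hk
    · rw [hsupp I (hj.trans hk.symm)]
      simp [hj, hk]
    · rw [if_pos ⟨hj, hk⟩]
      show ψ₃ I = ψ₃ (bld j k 0 1 fun q => I q.1)
      rw [← hj, ← hk, bld_eta]
    · have hn : ¬(I j = 0 ∧ I k = 1) := by rw [hj, hk]; decide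
      rw [if_neg hn, if_pos ⟨hj, hk⟩]
      show ψ₃ I = ψ₃ (bld j k 1 0 fun q => I q.1)
      rw [← hj, ← hk, bld_eta]
    · rw [hsupp I (hj.trans hk.symm)]
      simp [hj, hk]
  have hval : ∀ (a b : Fin 2) (c : ↥(({j, k} : Set (Fin n))ᶜ) → Fin 2),
      ψ₃ (bld j k a b c) = (if a = 0 ∧ b = 1 then φ₀ c
        else if a = 1 ∧ b = 0 then φ₁ c else 0) := by
    intro a b c
    rw [hstruct (bld j k a b c), bld_j, bld_k hjk, bld_restr]
  -- pick an element of the stabilizer outside the span of elt3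
  have heltW : eS j k (lam • matA) (lam • matA) ∈ stab ψ₃ ⊓ gS ({j, k} : Set (Fin n)) :=
    ⟨helt, eS_mem_gS (Submodule.smul_mem su2 lam matA_mem) (Submodule.smul_mem su2 lam matA_mem)⟩
  have helt0 : eS j k (lam • matA) (lam • matA) ≠ 0 := by
    intro h
    have h1 : ((eS j k (lam • matA) (lam • matA)).2 j) 0 0 = 0 := by rw [h]; rfl
    rw [eS_snd_j] at h1
    have hA00 : (lam • matA) 0 0 = (lam : ℂ) * Complex.I := by
      simp [matA, Matrix.smul_apply, Complex.real_smul]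
    rw [hA00] at h1
    rcases mul_eq_zero.mp h1 with h1 | h1
    · exact hlam (by exact_mod_cast h1)
    · exact Complex.I_ne_zero h1
  obtain ⟨w₂, hw₂W, hw₂span⟩ : ∃ w₂ ∈ stab ψ₃ ⊓ gS ({j, k} : Set (Fin n)),
      w₂ ∉ Submodule.span ℝ {eS j k (lam • matA) (lam • matA)} := by
    by_contra h
    push_neg at h
    have hle : stab ψ₃ ⊓ gS ({j, k} : Set (Fin n))
        ≤ Submodule.span ℝ {eS j k (lam • matA) (lam • matA)} := fun x hx => h x hx
    have h1 := Submodule.finrank_mono hle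
    rw [finrank_span_singleton helt0] at h1
    have := hblock₃.1
    omega
  obtain ⟨hw₂eq, hXsu, hYsu⟩ := mem_inf_structure hjk hw₂W
  set X : Matrix (Fin 2) (Fin 2) ℂ := w₂.2 j with hX_def
  set Y : Matrix (Fin 2) (Fin 2) ℂ := w₂.2 k with hY_def
  have hcontr : X 0 1 = 0 → Y 0 1 = 0 → Y 0 0 = X 0 0 → False := by
    intro h1 h2 h3
    apply hw₂span
    rw [hw₂eq]
    exact mem_span_elt3 hjk hlam hXsu hYsu h1 h2 h3
  have hker : dPhi ψ₃ (eS j k X Y) = 0 := by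
    have h := hw₂W.1.2
    have h' : dPhi ψ₃ w₂ = 0 := h
    rwa [hw₂eq] at h'
  have hcond : ∀ I : Fin n → Fin 2,
      (∑ c, X (I j) c * ψ₃ (Function.update I j c))
        + (∑ c, Y (I k) c * ψ₃ (Function.update I k c)) = 0 := by
    intro I
    have := congrFun hker I
    rw [dPhi_eS_apply hjk] at this
    exact this
  have he : ∀ (a b : Fin 2) (c : ↥(({j, k} : Set (Fin n))ᶜ) → Fin 2),
      (∑ c', X a c' * ψ₃ (bld j k c' b c)) + (∑ c', Y b c' * ψ₃ (bld j k a c' c)) = 0 := by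
    intro a b c
    have := hcond (bld j k a b c)
    rw [bld_j, bld_k hjk] at this
    simp only [bld_update_j hjk, bld_update_k hjk] at this
    exact this
  have e00 : ∀ c, X 0 1 * φ₁ c + Y 0 1 * φ₀ c = 0 := by
    intro c
    have := he 0 0 c
    rw [Fin.sum_univ_two, Fin.sum_univ_two] at this
    simp only [hval] at this
    norm_num at this
    linear_combination this
  have e01 : ∀ c, (X 0 0 + Y 1 1) * φ₀ c = 0 := by
    intro c
    have := he 0 1 c
    rw [Fin.sum_univ_two, Fin.sum_univ_two] at this
    simp only [hval] at this
    norm_num at this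
    linear_combination this
  have e10 : ∀ c, (X 1 1 + Y 0 0) * φ₁ c = 0 := by
    intro c
    have := he 1 0 c
    rw [Fin.sum_univ_two, Fin.sum_univ_two] at this
    simp only [hval] at this
    norm_num at this
    linear_combination this
  have e11 : ∀ c, X 1 0 * φ₀ c + Y 1 0 * φ₁ c = 0 := by
    intro c
    have := he 1 1 c
    rw [Fin.sum_univ_two, Fin.sum_univ_two] at this
    simp only [hval] at this
    norm_num at this
    linear_combination this
  -- at least one amplitude is nonzero
  have hphi : (∃ c, φ₀ c ≠ 0) ∨ (∃ c, φ₁ c ≠ 0) := by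
    by_contra h
    push_neg at h
    apply hψ₃0
    funext I
    rw [hstruct I]
    split_ifs
    · exact h.1 _
    · exact h.2 _
    · rfl
  -- rule out the degenerate cases
  rcases Classical.em (∃ c, φ₀ c ≠ 0) with ⟨c₁, hc₁⟩ | hA
  · rcases Classical.em (∃ c, φ₁ c ≠ 0) with ⟨c₀, hc₀⟩ | hB
    · -- main case : both amplitudes nonzero
      by_cases hX01 : X 0 1 = 0
      · exfalso
        have hY01 : Y 0 1 = 0 := by
          have := e00 c₁
          rw [hX01, zero_mul, zero_add] at this
          exact (mul_eq_zero.mp this).resolve_right hc₁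
        have hY00 : Y 0 0 = X 0 0 := by
          have := e01 c₁
          have h1 : X 0 0 + Y 1 1 = 0 := (mul_eq_zero.mp this).resolve_right hc₁
          have h2 : Y 1 1 = -Y 0 0 := su2_11 hYsu
          rw [h2] at h1
          linear_combination -h1
        exact hcontr hX01 hY01 hY00
      · -- the singlet case
        have hY01 : Y 0 1 ≠ 0 := by
          intro hY01
          have := e00 c₀
          rw [hY01, zero_mul, add_zero] at this
          exact hX01 ((mul_eq_zero.mp this).resolve_right hc₀)
        set γ : ℂ := -(X 0 1 / Y 0 1) with hγ_def
        have hγ0 : γ ≠ 0 := by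
          rw [hγ_def]
          simp only [neg_ne_zero]
          exact div_ne_zero hX01 hY01
        have hprop : ∀ c, φ₀ c = γ * φ₁ c := by
          intro c
          have h := e00 c
          have h2 : Y 0 1 * φ₀ c = Y 0 1 * (γ * φ₁ c) := by
            have h3 : Y 0 1 * (γ * φ₁ c) = -(X 0 1 * φ₁ c) := by
              rw [hγ_def]
              field_simp
            rw [h3]
            linear_combination h
          exact mul_left_cancel₀ hY01 h2
        have hγγ : γ * (starRingEnd ℂ) γ = 1 := by
          have h1 : Y 0 1 * γ = -X 0 1 := by
            rw [hγ_def]; field_simp; try ring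
          have h2 : X 1 0 * γ + Y 1 0 = 0 := by
            have := e11 c₀
            rw [hprop c₀] at this
            have h3 : (X 1 0 * γ + Y 1 0) * φ₁ c₀ = 0 := by linear_combination this
            exact (mul_eq_zero.mp h3).resolve_right hc₀
          rw [su2_10 hXsu, su2_10 hYsu] at h2
          -- h2 : -conj (X 0 1) * γ + -conj (Y 0 1) = 0
          have h4 : (starRingEnd ℂ) (Y 0 1) = -(starRingEnd ℂ) (X 0 1) * γ := by
            linear_combination -h2
          have h5 : Y 0 1 = -(X 0 1) * (starRingEnd ℂ) γ := by
            have := congrArg (starRingEnd ℂ) h4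
            simpa using this
          rw [h5] at h1
          have h6 : (γ * (starRingEnd ℂ) γ - 1) * X 0 1 = 0 := by linear_combination -h1
          have h7 := (mul_eq_zero.mp h6).resolve_right hX01
          linear_combination h7
        -- build the final local unitary
        set Zu : Matrix (Fin 2) (Fin 2) ℂ := !![(starRingEnd ℂ) γ, 0; 0, -1] with hZu_def
        have hγγ' : (starRingEnd ℂ) γ * γ = 1 := by linear_combination hγγ
        have hZu : Zu ∈ Matrix.unitaryGroup (Fin 2) ℂ := by
          rw [Matrix.mem_unitaryGroup_iff]
          ext a b
          fin_cases a <;> fin_cases b <;>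
            simp [hZu_def, Matrix.mul_apply, Fin.sum_univ_two, Matrix.star_eq_conjTranspose,
              Matrix.conjTranspose_apply, hγγ']
        set Zfam : Fin n → Matrix (Fin 2) (Fin 2) ℂ := fun q => if q = j then Zu else 1
          with hZfam_def
        have hZfam : ∀ q, Zfam q ∈ Matrix.unitaryGroup (Fin 2) ℂ := by
          intro q
          rw [hZfam_def]
          dsimp only
          split_ifs
          · exact hZu
          · exact one_unitary
        refine ⟨luApply Zfam ψ₃, ⟨fun q => Zfam q * V q,
          fun q => mul_mem (hZfam q) (hV q), by rw [← luApply_comp]⟩, j, k, hjk, φ₁, ?_⟩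
        intro I
        have hlu : luApply Zfam ψ₃ I = ∑ c, Zu (I j) c * ψ₃ (Function.update I j c) := by
          rw [hZfam_def]
          exact luApply_single j Zu ψ₃ I
        rw [hlu, Fin.sum_univ_two]
        have hupd : ∀ c : Fin 2, ψ₃ (Function.update I j c)
            = (if c = 0 ∧ I k = 1 then φ₀ (fun q => I q.1)
              else if c = 1 ∧ I k = 0 then φ₁ (fun q => I q.1) else 0) := by
          intro c
          rw [hstruct]
          rw [Function.update_self, Function.update_of_ne (Ne.symm hjk), restr_update_j]
        rw [hupd 0, hupd 1]
        rcases fin2_cases (I j) with hj | hj <;> rcases fin2_cases (I k) with hk | hk <;>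
            rw [hj, hk] <;> norm_num [singletFn, hZu_def]
        · rw [hprop]
          rw [← mul_assoc, mul_comm ((starRingEnd ℂ) γ) γ, hγγ, one_mul]
    · -- φ₁ ≡ 0
      exfalso
      push_neg at hB
      have hY01 : Y 0 1 = 0 := by
        have := e00 c₁
        rw [hB c₁, mul_zero, zero_add] at this
        exact (mul_eq_zero.mp this).resolve_right hc₁
      have hX10 : X 1 0 = 0 := by
        have := e11 c₁
        rw [hB c₁, mul_zero, add_zero] at this
        exact (mul_eq_zero.mp this).resolve_right hc₁
      have hX01 : X 0 1 = 0 := by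
        have h := su2_10 hXsu
        rw [hX10] at h
        have := congrArg (starRingEnd ℂ) h.symm
        simpa using this
      have hY00 : Y 0 0 = X 0 0 := by
        have := e01 c₁
        have h1 : X 0 0 + Y 1 1 = 0 := (mul_eq_zero.mp this).resolve_right hc₁
        rw [su2_11 hYsu] at h1
        linear_combination -h1
      exact hcontr hX01 hY01 hY00
  · -- φ₀ ≡ 0
    exfalso
    push_neg at hA
    obtain ⟨c₀, hc₀⟩ : ∃ c, φ₁ c ≠ 0 := by
      rcases hphi with h | h
      · obtain ⟨c, hc⟩ := h; exact absurd (hA c) hc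
      · exact h
    have hX01 : X 0 1 = 0 := by
      have := e00 c₀
      rw [hA c₀, mul_zero, add_zero] at this
      exact (mul_eq_zero.mp this).resolve_right hc₀
    have hY10 : Y 1 0 = 0 := by
      have := e11 c₀
      rw [hA c₀, mul_zero, zero_add] at this
      exact (mul_eq_zero.mp this).resolve_right hc₀
    have hY01 : Y 0 1 = 0 := by
      have h := su2_10 hYsu
      rw [hY10] at h
      have := congrArg (starRingEnd ℂ) h.symm
      simpa using this
    have hY00 : Y 0 0 = X 0 0 := by
      have := e10 c₀
      have h1 : X 1 1 + Y 0 0 = 0 := (mul_eq_zero.mp this).resolve_right hc₀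
      rw [su2_11 hXsu] at h1
      linear_combination h1
    exact hcontr hX01 hY01 hY00

end Stmt10Aux

/-- For `n ≥ 2`, there is an `su(2)` block for `ψ` containing exactly
2 qubits if and only if `ψ` has a singlet factor. -/
theorem stmt10 {n : ℕ} (hn : 2 ≤ n) (ψ : QState n) (hψ : ψ ≠ 0) :
    (∃ S : Set (Fin n), Su2Block ψ S ∧ S.ncard = 2) ↔ HasSingletFactor ψ := by
  constructor
  · rintro ⟨S, hS, hcard⟩
    obtain ⟨j, k, hjk, rfl⟩ := Set.ncard_eq_two.mp hcard
    exact Stmt10Aux.singlet_of_block hψ hjk hS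
  · rintro ⟨ψ', ⟨U, hU, hψ'eq⟩, j, k, hjk, χ, hform⟩
    have hψ'0 : ψ' ≠ 0 := hψ'eq ▸ Stmt10Aux.luApply_ne_zero U hU ψ hψ
    have hχ : χ ≠ 0 := by
      intro h0
      apply hψ'0
      funext I
      rw [hform I, h0]
      simp
    have hblock' := Stmt10Aux.block_of_singlet hjk χ hχ ψ' hform
    refine ⟨{j, k}, ?_, Set.ncard_pair hjk⟩
    rw [hψ'eq] at hblock'
    exact (Stmt10Aux.su2Block_luApply_iff hU ψ _).mp hblock'
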